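/- Let (H →∂ G, ▷) be a crossed module. Let g₁₃, g₁₄, g₁₅, g₃₄, g₃₅, g₄₅ ∈ G and h₁₃₄, h₁₃₅, h₁₄₅, h₃₄₅ ∈ H. Assume: (1) g₃₅ = ∂(h₁₃₅)⁻¹ g₁₅ g₁₃⁻¹ (flatness of face 135); (2) h₃₄₅ = h₁₃₅⁻¹ h₁₄₅ (g₄₅ ▷ h₁₃₄) (flatness of tetrahedron 1345); (3) g₁₄ = ∂(h₁₃₄) g₃₄ g₁₃ (flatness of face 134); (4) g₁₅ = ∂(h₁₄₅) g₄₅ g₁₄ (flatness of face 145). Then ∂(h₃₄₅) g₄₅ g₃₄ g₃₅⁻¹ = 1 (flatness of face 345). -/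
import Mathlib

/-- A crossed module `(H --∂--> G, ▷)`: groups `G`, `H`, a group homomorphism
`δ : H →* G`, and a left action of `G` on `H` in which every `g : G` acts as a
group automorphism of `H` (encoded as `act : G →* MulAut H`), satisfying the
equivariance axiom and the Peiffer identity. -/
structure CrossedModule (G H : Type*) [Group G] [Group H] where
  δ : H →* G
  act : G →* MulAut H
  equivariance : ∀ (g : G) (h : H), δ (act g h) = g * δ h * g⁻¹
  peiffer : ∀ (h h' : H), act (δ h) h' = h * h' * h⁻¹

/-- Flatness of faces 135, 134, 145 and of tetrahedron 1345 implies flatness of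
face 345. -/
theorem face345_flat {G H : Type*} [Group G] [Group H] (X : CrossedModule G H)
    (g₁₃ g₁₄ g₁₅ g₃₄ g₃₅ g₄₅ : G) (h₁₃₄ h₁₃₅ h₁₄₅ h₃₄₅ : H)
    (h1 : g₃₅ = (X.δ h₁₃₅)⁻¹ * g₁₅ * g₁₃⁻¹)
    (h2 : h₃₄₅ = h₁₃₅⁻¹ * h₁₄₅ * X.act g₄₅ h₁₃₄)
    (h3 : g₁₄ = X.δ h₁₃₄ * g₃₄ * g₁₃)
    (h4 : g₁₅ = X.δ h₁₄₅ * g₄₅ * g₁₄) :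
    X.δ h₃₄₅ * g₄₅ * g₃₄ * g₃₅⁻¹ = 1 := by
  subst h1 h2 h3 h4
  simp only [map_mul, map_inv, X.equivariance]
  group
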